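/- Fix μ ∈ X and let X₁, X₂, X₃, … be independent random elements of X each with law P. For n ≥ 1 define the sample metric spatial depth D_n(μ) := 1 − (1/(2n²)) Σ_{i=1}^n Σ_{j=1}^n h(X_i, X_j, μ). Then √n·(D_n(μ) − D(μ; P)) is bounded in probability: for every ε > 0 there exists M > 0 such that for all n ≥ 1, P(|D_n(μ) − D(μ; P)| > M/√n) ≤ ε. -/

import Mathlib

open MeasureTheory
open scoped ProbabilityTheory
open scoped Classical

/-- The kernel `h` of the metric spatial depth. -/
noncomputable def mh {X : Type*} [MetricSpace X] (x₁ x₂ x₃ : X) : ℝ :=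
  if x₃ = x₁ ∨ x₃ = x₂ then 0
  else (dist x₁ x₃ ^ 2 + dist x₂ x₃ ^ 2 - dist x₁ x₂ ^ 2) / (dist x₁ x₃ * dist x₂ x₃)

/-- The metric spatial depth of `μ` with respect to the measure `P`. -/
noncomputable def msDepth {X : Type*} [MetricSpace X] [MeasurableSpace X]
    (μ : X) (P : Measure X) : ℝ :=
  1 - (1 / 2) * ∫ x₁, ∫ x₂, mh x₁ x₂ μ ∂P ∂P

lemma mh_abs_le {X : Type*} [MetricSpace X] (x₁ x₂ x₃ : X) : |mh x₁ x₂ x₃| ≤ 2 := by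
  unfold mh
  split
  · norm_num
  · rename_i h
    push_neg at h
    have ha : 0 < dist x₁ x₃ := dist_pos.mpr (fun he => h.1 he.symm)
    have hb : 0 < dist x₂ x₃ := dist_pos.mpr (fun he => h.2 he.symm)
    have h1 : dist x₁ x₂ ≤ dist x₁ x₃ + dist x₂ x₃ := by
      calc dist x₁ x₂ ≤ dist x₁ x₃ + dist x₃ x₂ := dist_triangle _ _ _
        _ = dist x₁ x₃ + dist x₂ x₃ := by rw [dist_comm x₃ x₂]
    have h2 : dist x₁ x₃ ≤ dist x₁ x₂ + dist x₂ x₃ := dist_triangle _ _ _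
    have h3 : dist x₂ x₃ ≤ dist x₂ x₁ + dist x₁ x₃ := dist_triangle _ _ _
    rw [dist_comm x₂ x₁] at h3
    have hc : 0 ≤ dist x₁ x₂ := dist_nonneg
    rw [abs_div, abs_of_pos (mul_pos ha hb), div_le_iff₀ (mul_pos ha hb), abs_le]
    constructor <;> nlinarith

lemma mh_meas {X : Type*} [MetricSpace X] [SecondCountableTopology X] [MeasurableSpace X]
    [BorelSpace X] (μ : X) : Measurable (fun p : X × X => mh p.1 p.2 μ) := by
  unfold mh
  apply Measurable.ite
  · have h1 : MeasurableSet {p : X × X | μ = p.1} := by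
      have : {p : X × X | μ = p.1} = Prod.fst ⁻¹' {x | μ = x} := rfl
      rw [this]
      exact measurable_fst (by simp [eq_comm])
    have h2 : MeasurableSet {p : X × X | μ = p.2} := by
      have : {p : X × X | μ = p.2} = Prod.snd ⁻¹' {x | μ = x} := rfl
      rw [this]
      exact measurable_snd (by simp [eq_comm])
    exact h1.union h2
  · exact measurable_const
  · have hd1 : Measurable fun p : X × X => dist p.1 μ :=
      (continuous_fst.dist continuous_const).measurable
    have hd2 : Measurable fun p : X × X => dist p.2 μ :=
      (continuous_snd.dist continuous_const).measurable
    have hd3 : Measurable fun p : X × X => dist p.1 p.2 :=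
      (continuous_fst.dist continuous_snd).measurable
    exact (((hd1.pow_const 2).add (hd2.pow_const 2)).sub (hd3.pow_const 2)).div (hd1.mul hd2)

/-- 0/1 indicator for equality of naturals, as a real number. -/
noncomputable def eN (a b : ℕ) : ℝ := if a = b then 1 else 0

lemma eN_nonneg (a b : ℕ) : 0 ≤ eN a b := by unfold eN; split <;> norm_num

lemma eN_le_one (a b : ℕ) : eN a b ≤ 1 := by unfold eN; split <;> norm_num

lemma count_le (n : ℕ) : ∑ i ∈ Finset.range n, ∑ k ∈ Finset.range n, ∑ j ∈ Finset.range n,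
    ∑ l ∈ Finset.range n, 16*(eN i j + eN k l + eN i k + eN i l + eN j k + eN j l)
    ≤ 96*(n:ℝ)^3 := by
  have r := Finset.range n
  have key : ∀ (s : Finset ℕ) (a : ℕ), ∑ b ∈ s, eN a b ≤ 1 := by
    intro s a; unfold eN; rw [Finset.sum_ite_eq]; split <;> norm_num
  have key' : ∀ (s : Finset ℕ) (b : ℕ), ∑ a ∈ s, eN a b ≤ 1 := by
    intro s b; unfold eN; rw [Finset.sum_ite_eq']; split <;> norm_num
  have hcube : ∑ i ∈ Finset.range n, ∑ k ∈ Finset.range n, ∑ j ∈ Finset.range n, (1:ℝ) = (n:ℝ)^3 := by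
    simp [Finset.sum_const, Finset.card_range]; ring
  have hA : ∑ i ∈ Finset.range n, ∑ k ∈ Finset.range n, ∑ j ∈ Finset.range n, ∑ l ∈ Finset.range n, eN i j ≤ (n:ℝ)^3 := by
    calc ∑ i ∈ Finset.range n, ∑ k ∈ Finset.range n, ∑ j ∈ Finset.range n, ∑ l ∈ Finset.range n, eN i j
        = ∑ i ∈ Finset.range n, ∑ k ∈ Finset.range n, (n:ℝ) * ∑ j ∈ Finset.range n, eN i j := by
          simp [Finset.sum_const, Finset.card_range, Finset.mul_sum]
      _ ≤ ∑ i ∈ Finset.range n, ∑ k ∈ Finset.range n, (n:ℝ) * 1 := by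
          refine Finset.sum_le_sum fun i _ => Finset.sum_le_sum fun k _ => ?_
          exact mul_le_mul_of_nonneg_left (key (Finset.range n) i) (by positivity)
      _ ≤ (n:ℝ)^3 := by simp [Finset.sum_const, Finset.card_range]; nlinarith [Nat.cast_nonneg (α := ℝ) n]
  have hB : ∑ i ∈ Finset.range n, ∑ k ∈ Finset.range n, ∑ j ∈ Finset.range n, ∑ l ∈ Finset.range n, eN k l ≤ (n:ℝ)^3 := by
    calc ∑ i ∈ Finset.range n, ∑ k ∈ Finset.range n, ∑ j ∈ Finset.range n, ∑ l ∈ Finset.range n, eN k l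
        ≤ ∑ i ∈ Finset.range n, ∑ k ∈ Finset.range n, ∑ j ∈ Finset.range n, (1:ℝ) :=
          Finset.sum_le_sum fun i _ => Finset.sum_le_sum fun k _ =>
            Finset.sum_le_sum fun j _ => key (Finset.range n) k
      _ = (n:ℝ)^3 := hcube
  have hC : ∑ i ∈ Finset.range n, ∑ k ∈ Finset.range n, ∑ j ∈ Finset.range n, ∑ l ∈ Finset.range n, eN i k ≤ (n:ℝ)^3 := by
    calc ∑ i ∈ Finset.range n, ∑ k ∈ Finset.range n, ∑ j ∈ Finset.range n, ∑ l ∈ Finset.range n, eN i k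
        = ∑ i ∈ Finset.range n, (n:ℝ)^2 * ∑ k ∈ Finset.range n, eN i k := by
          simp [Finset.sum_const, Finset.card_range, Finset.mul_sum]; ring_nf
      _ ≤ ∑ i ∈ Finset.range n, (n:ℝ)^2 * 1 := by
          refine Finset.sum_le_sum fun i _ => ?_
          exact mul_le_mul_of_nonneg_left (key (Finset.range n) i) (by positivity)
      _ ≤ (n:ℝ)^3 := by simp [Finset.sum_const, Finset.card_range]; nlinarith [Nat.cast_nonneg (α := ℝ) n]
  have hD : ∑ i ∈ Finset.range n, ∑ k ∈ Finset.range n, ∑ j ∈ Finset.range n, ∑ l ∈ Finset.range n, eN i l ≤ (n:ℝ)^3 := by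
    calc ∑ i ∈ Finset.range n, ∑ k ∈ Finset.range n, ∑ j ∈ Finset.range n, ∑ l ∈ Finset.range n, eN i l
        ≤ ∑ i ∈ Finset.range n, ∑ k ∈ Finset.range n, ∑ j ∈ Finset.range n, (1:ℝ) :=
          Finset.sum_le_sum fun i _ => Finset.sum_le_sum fun k _ =>
            Finset.sum_le_sum fun j _ => key (Finset.range n) i
      _ = (n:ℝ)^3 := hcube
  have hE : ∑ i ∈ Finset.range n, ∑ k ∈ Finset.range n, ∑ j ∈ Finset.range n, ∑ l ∈ Finset.range n, eN j k ≤ (n:ℝ)^3 := by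
    calc ∑ i ∈ Finset.range n, ∑ k ∈ Finset.range n, ∑ j ∈ Finset.range n, ∑ l ∈ Finset.range n, eN j k
        = ∑ i ∈ Finset.range n, ∑ k ∈ Finset.range n, (n:ℝ) * ∑ j ∈ Finset.range n, eN j k := by
          simp [Finset.sum_const, Finset.card_range, Finset.mul_sum]
      _ ≤ ∑ i ∈ Finset.range n, ∑ k ∈ Finset.range n, (n:ℝ) * 1 := by
          refine Finset.sum_le_sum fun i _ => Finset.sum_le_sum fun k _ => ?_
          exact mul_le_mul_of_nonneg_left (key' (Finset.range n) k) (by positivity)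
      _ ≤ (n:ℝ)^3 := by simp [Finset.sum_const, Finset.card_range]; nlinarith [Nat.cast_nonneg (α := ℝ) n]
  have hF : ∑ i ∈ Finset.range n, ∑ k ∈ Finset.range n, ∑ j ∈ Finset.range n, ∑ l ∈ Finset.range n, eN j l ≤ (n:ℝ)^3 := by
    calc ∑ i ∈ Finset.range n, ∑ k ∈ Finset.range n, ∑ j ∈ Finset.range n, ∑ l ∈ Finset.range n, eN j l
        ≤ ∑ i ∈ Finset.range n, ∑ k ∈ Finset.range n, ∑ j ∈ Finset.range n, (1:ℝ) :=
          Finset.sum_le_sum fun i _ => Finset.sum_le_sum fun k _ =>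
            Finset.sum_le_sum fun j _ => key (Finset.range n) j
      _ = (n:ℝ)^3 := hcube
  calc ∑ i ∈ Finset.range n, ∑ k ∈ Finset.range n, ∑ j ∈ Finset.range n, ∑ l ∈ Finset.range n,
        16*(eN i j + eN k l + eN i k + eN i l + eN j k + eN j l)
      = 16 * ((∑ i ∈ Finset.range n, ∑ k ∈ Finset.range n, ∑ j ∈ Finset.range n, ∑ l ∈ Finset.range n, eN i j)
        + (∑ i ∈ Finset.range n, ∑ k ∈ Finset.range n, ∑ j ∈ Finset.range n, ∑ l ∈ Finset.range n, eN k l)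
        + (∑ i ∈ Finset.range n, ∑ k ∈ Finset.range n, ∑ j ∈ Finset.range n, ∑ l ∈ Finset.range n, eN i k)
        + (∑ i ∈ Finset.range n, ∑ k ∈ Finset.range n, ∑ j ∈ Finset.range n, ∑ l ∈ Finset.range n, eN i l)
        + (∑ i ∈ Finset.range n, ∑ k ∈ Finset.range n, ∑ j ∈ Finset.range n, ∑ l ∈ Finset.range n, eN j k)
        + (∑ i ∈ Finset.range n, ∑ k ∈ Finset.range n, ∑ j ∈ Finset.range n, ∑ l ∈ Finset.range n, eN j l)) := by
        simp only [Finset.sum_add_distrib, Finset.mul_sum, mul_add]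
    _ ≤ 96*(n:ℝ)^3 := by linarith


lemma int_of_bdd {α : Type*} [MeasurableSpace α] {Q : Measure α} [IsFiniteMeasure Q]
    {h : α → ℝ} (hm : Measurable h) {C : ℝ} (hC : ∀ x, |h x| ≤ C) : Integrable h Q :=
  (integrable_const C).mono' hm.aestronglyMeasurable
    (ae_of_all _ fun x => by simpa [Real.norm_eq_abs] using hC x)

theorem sample_msDepth_rootn_consistent {X : Type*} [MetricSpace X] [CompleteSpace X]
    [SecondCountableTopology X] [MeasurableSpace X] [BorelSpace X]
    {Ω : Type*} [MeasureSpace Ω] [IsProbabilityMeasure (ℙ : Measure Ω)]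
    (P : Measure X) [IsProbabilityMeasure P] (μ : X)
    (Xs : ℕ → Ω → X) (hmeas : ∀ i, Measurable (Xs i))
    (hlaw : ∀ i, Measure.map (Xs i) ℙ = P)
    (hindep : ProbabilityTheory.iIndepFun Xs ℙ) :
    ∀ ε > (0 : ℝ), ∃ M > (0 : ℝ), ∀ n : ℕ, 1 ≤ n →
      ℙ {ω : Ω |
          |(1 - (1 / (2 * (n : ℝ) ^ 2)) * ∑ i ∈ Finset.range n, ∑ j ∈ Finset.range n,
              mh (Xs i ω) (Xs j ω) μ) - msDepth μ P| > M / Real.sqrt n}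
        ≤ ENNReal.ofReal ε := by
  intro ε hε
  set f : X × X → ℝ := fun p => mh p.1 p.2 μ with hfdef
  have hfm : Measurable f := mh_meas μ
  have hfb : ∀ p, |f p| ≤ 2 := fun p => mh_abs_le _ _ _
  -- a bounded measurable function is integrable w.r.t. a probability measure
  have hPP : Integrable f (P.prod P) := int_of_bdd hfm hfb
  set m : ℝ := ∫ p, f p ∂(P.prod P) with hmdef
  have hmabs : |m| ≤ 2 := by
    have := norm_integral_le_of_norm_le_const (μ := P.prod P) (f := f) (C := 2)
      (ae_of_all _ fun p => by simpa [Real.norm_eq_abs] using hfb p)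
    simpa [Real.norm_eq_abs] using this
  have hdepth : msDepth μ P = 1 - (1/2) * m := by
    rw [msDepth, hmdef, integral_prod _ hPP]
  set g : ℕ → ℕ → Ω → ℝ := fun i j ω => f (Xs i ω, Xs j ω) - m with hgdef
  have hgm : ∀ i j, Measurable (g i j) := fun i j =>
    (hfm.comp ((hmeas i).prodMk (hmeas j))).sub measurable_const
  have hgb : ∀ i j ω, |g i j ω| ≤ 4 := by
    intro i j ω
    have h1 := abs_le.mp (hfb (Xs i ω, Xs j ω))
    have h2 := abs_le.mp hmabs
    rw [abs_le]
    constructor <;> simp only [hgdef] <;> linarith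
  have hgint : ∀ i j, Integrable (g i j) ℙ := fun i j => int_of_bdd (hgm i j) (hgb i j)
  have hprodint : ∀ i j k l, Integrable (fun ω => g i j ω * g k l ω) ℙ := by
    intro i j k l
    refine int_of_bdd ((hgm i j).mul (hgm k l)) (C := 16) fun ω => ?_
    rw [abs_mul]
    calc |g i j ω| * |g k l ω| ≤ 4 * 4 :=
      mul_le_mul (hgb i j ω) (hgb k l ω) (abs_nonneg _) (by norm_num)
    _ = 16 := by norm_num
  -- mean zero for off-diagonal terms
  have hzero : ∀ i j, i ≠ j → ∫ ω, g i j ω ∂ℙ = 0 := by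
    intro i j hij
    have hpair : Measure.map (fun ω => (Xs i ω, Xs j ω)) ℙ = P.prod P := by
      have hind := hindep.indepFun hij
      rw [ProbabilityTheory.indepFun_iff_map_prod_eq_prod_map_map (hmeas i).aemeasurable
        (hmeas j).aemeasurable] at hind
      rw [hind, hlaw i, hlaw j]
    have hmean : ∫ ω, f (Xs i ω, Xs j ω) ∂ℙ = m := by
      rw [hmdef, ← hpair,
        integral_map ((hmeas i).prodMk (hmeas j)).aemeasurable hfm.aestronglyMeasurable]
    have : Integrable (fun ω => f (Xs i ω, Xs j ω)) ℙ :=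
      int_of_bdd (hfm.comp ((hmeas i).prodMk (hmeas j))) (fun ω => hfb _)
    simp only [hgdef]
    rw [integral_sub this (integrable_const m), hmean, integral_const]
    simp
  -- zero covariance for disjoint index pairs
  have hprodzero : ∀ i j k l, i ≠ j → k ≠ l → i ≠ k → i ≠ l → j ≠ k → j ≠ l →
      ∫ ω, g i j ω * g k l ω ∂ℙ = 0 := by
    intro i j k l hij hkl hik hil hjk hjl
    have hIndPair := hindep.indepFun_prodMk_prodMk hmeas i j k l hik hil hjk hjl
    have hInd : ProbabilityTheory.IndepFun (g i j) (g k l) ℙ :=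
      hIndPair.comp (hfm.sub measurable_const) (hfm.sub measurable_const)
    have hmul : ∫ ω, g i j ω * g k l ω ∂ℙ = (∫ ω, g i j ω ∂ℙ) * ∫ ω, g k l ω ∂ℙ := by
      simpa using hInd.integral_mul_eq_mul_integral (hgint i j).aestronglyMeasurable (hgint k l).aestronglyMeasurable
    rw [hmul, hzero i j hij, zero_mul]
  have hprodbd : ∀ i j k l, ∫ ω, g i j ω * g k l ω ∂ℙ ≤ 16 := by
    intro i j k l
    calc ∫ ω, g i j ω * g k l ω ∂ℙ ≤ ∫ _ω, (16:ℝ) ∂ℙ := by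
          refine integral_mono (hprodint i j k l) (integrable_const _) fun ω => ?_
          calc g i j ω * g k l ω ≤ |g i j ω * g k l ω| := le_abs_self _
            _ ≤ 16 := by
              rw [abs_mul]
              calc |g i j ω| * |g k l ω| ≤ 4 * 4 :=
                mul_le_mul (hgb i j ω) (hgb k l ω) (abs_nonneg _) (by norm_num)
              _ = 16 := by norm_num
      _ = 16 := by simp
  -- term-wise bound
  have hterm : ∀ i j k l : ℕ, ∫ ω, g i j ω * g k l ω ∂ℙ ≤
      16 * (eN i j + eN k l + eN i k + eN i l + eN j k + eN j l) := by
    intro i j k l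
    by_cases hbad : i = j ∨ k = l ∨ i = k ∨ i = l ∨ j = k ∨ j = l
    · have hsum : (1:ℝ) ≤ eN i j + eN k l + eN i k + eN i l + eN j k + eN j l := by
        rcases hbad with h|h|h|h|h|h <;> subst h <;> simp only [eN] <;>
          split_ifs <;> norm_num
      calc ∫ ω, g i j ω * g k l ω ∂ℙ ≤ 16 := hprodbd i j k l
        _ ≤ 16 * (eN i j + eN k l + eN i k + eN i l + eN j k + eN j l) := by linarith
    · push_neg at hbad
      obtain ⟨h1, h2, h3, h4, h5, h6⟩ := hbad
      rw [hprodzero i j k l h1 h2 h3 h4 h5 h6]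
      have := eN_nonneg i j; have := eN_nonneg k l; have := eN_nonneg i k
      have := eN_nonneg i l; have := eN_nonneg j k; have := eN_nonneg j l
      linarith
  refine ⟨Real.sqrt (24/ε), Real.sqrt_pos.mpr (by positivity), ?_⟩
  intro n hn
  set M := Real.sqrt (24/ε) with hMdef
  have hM2 : M^2 = 24/ε := Real.sq_sqrt (by positivity)
  have hMpos : 0 < M := Real.sqrt_pos.mpr (by positivity)
  have hnR : (0:ℝ) < n := by exact_mod_cast hn
  have hsq : Real.sqrt n ^ 2 = (n:ℝ) := Real.sq_sqrt (by positivity)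
  have hsqpos : 0 < Real.sqrt n := Real.sqrt_pos.mpr hnR
  set T : Ω → ℝ := fun ω => ∑ i ∈ Finset.range n, ∑ j ∈ Finset.range n, g i j ω with hTdef
  have hTm : Measurable T :=
    Finset.measurable_sum _ fun i _ => Finset.measurable_sum _ fun j _ => hgm i j
  have hTb : ∀ ω, |T ω| ≤ 4 * (n:ℝ)^2 := by
    intro ω
    calc |T ω| ≤ ∑ i ∈ Finset.range n, |∑ j ∈ Finset.range n, g i j ω| :=
          Finset.abs_sum_le_sum_abs _ _
      _ ≤ ∑ i ∈ Finset.range n, ∑ j ∈ Finset.range n, |g i j ω| :=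
          Finset.sum_le_sum fun i _ => Finset.abs_sum_le_sum_abs _ _
      _ ≤ ∑ i ∈ Finset.range n, ∑ j ∈ Finset.range n, (4:ℝ) :=
          Finset.sum_le_sum fun i _ => Finset.sum_le_sum fun j _ => hgb i j ω
      _ = 4 * (n:ℝ)^2 := by simp [Finset.sum_const, Finset.card_range]; ring
  have hT2int : Integrable (fun ω => T ω * T ω) ℙ := by
    refine int_of_bdd (hTm.mul hTm) (C := (4*(n:ℝ)^2)*(4*(n:ℝ)^2)) fun ω => ?_
    rw [abs_mul]
    exact mul_le_mul (hTb ω) (hTb ω) (abs_nonneg _) (by positivity)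
  -- second moment bound
  have hvar : ∫ ω, T ω * T ω ∂ℙ ≤ 96 * (n:ℝ)^3 := by
    have hexp : ∀ ω, T ω * T ω = ∑ i ∈ Finset.range n, ∑ k ∈ Finset.range n,
        ∑ j ∈ Finset.range n, ∑ l ∈ Finset.range n, g i j ω * g k l ω := by
      intro ω
      rw [hTdef]
      rw [Finset.sum_mul_sum]
      exact Finset.sum_congr rfl fun i _ => Finset.sum_congr rfl fun k _ =>
        Finset.sum_mul_sum _ _ _ _
    have hIexp : ∫ ω, T ω * T ω ∂ℙ = ∑ i ∈ Finset.range n, ∑ k ∈ Finset.range n,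
        ∑ j ∈ Finset.range n, ∑ l ∈ Finset.range n, ∫ ω, g i j ω * g k l ω ∂ℙ := by
      simp_rw [hexp]
      rw [integral_finset_sum _ (fun i _ => integrable_finset_sum _ fun k _ =>
        integrable_finset_sum _ fun j _ => integrable_finset_sum _ fun l _ => hprodint i j k l)]
      refine Finset.sum_congr rfl fun i _ => ?_
      rw [integral_finset_sum _ (fun k _ => integrable_finset_sum _ fun j _ =>
        integrable_finset_sum _ fun l _ => hprodint i j k l)]
      refine Finset.sum_congr rfl fun k _ => ?_
      rw [integral_finset_sum _ (fun j _ => integrable_finset_sum _ fun l _ => hprodint i j k l)]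
      refine Finset.sum_congr rfl fun j _ => ?_
      rw [integral_finset_sum _ (fun l _ => hprodint i j k l)]
    rw [hIexp]
    calc ∑ i ∈ Finset.range n, ∑ k ∈ Finset.range n, ∑ j ∈ Finset.range n, ∑ l ∈ Finset.range n,
          ∫ ω, g i j ω * g k l ω ∂ℙ
        ≤ ∑ i ∈ Finset.range n, ∑ k ∈ Finset.range n, ∑ j ∈ Finset.range n, ∑ l ∈ Finset.range n,
          16*(eN i j + eN k l + eN i k + eN i l + eN j k + eN j l) :=
          Finset.sum_le_sum fun i _ => Finset.sum_le_sum fun k _ =>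
            Finset.sum_le_sum fun j _ => Finset.sum_le_sum fun l _ => hterm i j k l
      _ ≤ 96 * (n:ℝ)^3 := count_le n
  -- deviation identity
  have hiden : ∀ ω : Ω, (1 - (1 / (2 * (n : ℝ) ^ 2)) * ∑ i ∈ Finset.range n, ∑ j ∈ Finset.range n,
      mh (Xs i ω) (Xs j ω) μ) - msDepth μ P = -(T ω)/(2*(n:ℝ)^2) := by
    intro ω
    have hS : ∑ i ∈ Finset.range n, ∑ j ∈ Finset.range n, mh (Xs i ω) (Xs j ω) μ
        = T ω + (n:ℝ)^2 * m := by
      have hT' : T ω = ∑ i ∈ Finset.range n, ∑ j ∈ Finset.range n,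
          (mh (Xs i ω) (Xs j ω) μ - m) := rfl
      rw [hT']
      simp [Finset.sum_sub_distrib, Finset.sum_const, Finset.card_range]
      ring
    rw [hdepth, hS]
    have hne : (n:ℝ)^2 ≠ 0 := by positivity
    field_simp
    ring
  set a : ℝ := (2 * M * (n:ℝ)^2 / Real.sqrt n)^2 with hadef
  have hapos : 0 < a := by positivity
  have hsubset : {ω : Ω |
      |(1 - (1 / (2 * (n : ℝ) ^ 2)) * ∑ i ∈ Finset.range n, ∑ j ∈ Finset.range n,
        mh (Xs i ω) (Xs j ω) μ) - msDepth μ P| > M / Real.sqrt n}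
      ⊆ {ω : Ω | a ≤ T ω * T ω} := by
    intro ω hω
    simp only [Set.mem_setOf_eq] at hω ⊢
    rw [hiden ω] at hω
    have h1 : M / Real.sqrt n < |T ω| / (2*(n:ℝ)^2) := by
      rw [gt_iff_lt] at hω
      rwa [abs_div, abs_neg, abs_of_pos (by positivity : (0:ℝ) < 2*(n:ℝ)^2)] at hω
    have h2 : 2 * M * (n:ℝ)^2 / Real.sqrt n < |T ω| := by
      rw [div_lt_div_iff₀ hsqpos (by positivity : (0:ℝ) < 2*(n:ℝ)^2)] at h1
      rw [div_lt_iff₀ hsqpos]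
      linarith
    have hb : 0 ≤ 2 * M * (n:ℝ)^2 / Real.sqrt n := by positivity
    calc a = (2*M*(n:ℝ)^2/Real.sqrt n) * (2*M*(n:ℝ)^2/Real.sqrt n) := by rw [hadef]; ring
      _ ≤ |T ω| * |T ω| := mul_le_mul h2.le h2.le hb (abs_nonneg _)
      _ = T ω * T ω := abs_mul_abs_self _
  have hmarkov := mul_meas_ge_le_integral_of_nonneg (μ := ℙ) (f := fun ω => T ω * T ω)
    (ae_of_all _ fun ω => mul_self_nonneg (T ω)) hT2int a
  have hmeasle : (ℙ {ω | a ≤ T ω * T ω}).toReal ≤ (96*(n:ℝ)^3) / a := by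
    rw [le_div_iff₀ hapos]
    calc (ℙ {ω | a ≤ T ω * T ω}).toReal * a
        = a * (ℙ {ω | a ≤ T ω * T ω}).toReal := by ring
      _ ≤ ∫ ω, T ω * T ω ∂ℙ := hmarkov
      _ ≤ 96*(n:ℝ)^3 := hvar
  have haval : a = 96*(n:ℝ)^3/ε := by
    rw [hadef, div_pow, mul_pow, mul_pow, hsq, hM2]
    have : ε ≠ 0 := ne_of_gt hε
    field_simp
    ring
  have hfinal : (96*(n:ℝ)^3)/a = ε := by
    rw [haval]
    have h1 : (96:ℝ)*(n:ℝ)^3 ≠ 0 := by positivity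
    field_simp
  refine le_trans (measure_mono hsubset) ?_
  rw [ENNReal.le_ofReal_iff_toReal_le (measure_ne_top _ _) hε.le]
  calc (ℙ {ω | a ≤ T ω * T ω}).toReal ≤ (96*(n:ℝ)^3)/a := hmeasle
    _ = ε := hfinal
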